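/- arXiv:2212.05151 — 7 statements merged into one kernel-verified Lean document; each statement's English description precedes it below -/
import Mathlib

section
/- For the Bernoulli model, for every m = 1, …, N−1 and every x = (x_1,…,x_m) ∈ {0,1}^m with s_m = x_1 + … + x_m, one has (𝒥_{m+1} U_{m+1}^N)(s_m) = C(m, s_m) · (𝓘_{m+1} V_{m+1}^N)(x_1,…,x_m), where C(m,s) is the binomial coefficient. (Proposition 1.) -/
open scoped BigOperators

/-- number of successes in the sample `x` -/
def count {n : ℕ} (x : Fin n → Bool) : ℕ := (Finset.univ.filter fun i => x i).card

/-- joint Bernoulli density `f_θ^n(x) = θ^{s_n(x)} (1-θ)^{n-s_n(x)}` -/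
noncomputable def fpow (θ : ℝ) (n : ℕ) (x : Fin n → Bool) : ℝ :=
  θ ^ count x * (1 - θ) ^ (n - count x)

/-- binomial pmf `g_θ^n(s) = C(n,s) θ^s (1-θ)^{n-s}` -/
noncomputable def binom (θ : ℝ) (n s : ℕ) : ℝ :=
  (n.choose s : ℝ) * θ ^ s * (1 - θ) ^ (n - s)

/-- `v_n(x) = min_{1≤j≤k} Σ_{i≠j} λ_{ij} f_{θ_i}^n(x)` -/
noncomputable def vfun (k : ℕ) (θs : Fin k → ℝ) (lam : Fin k → Fin k → ℝ)
    (n : ℕ) (x : Fin n → Bool) : ℝ :=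
  ⨅ j : Fin k, ∑ i ∈ Finset.univ.filter (· ≠ j), lam i j * fpow (θs i) n x

/-- `u_n(s) = min_{1≤j≤k} Σ_{i≠j} λ_{ij} g_{θ_i}^n(s)` -/
noncomputable def ufun (k : ℕ) (θs : Fin k → ℝ) (lam : Fin k → Fin k → ℝ)
    (n s : ℕ) : ℝ :=
  ⨅ j : Fin k, ∑ i ∈ Finset.univ.filter (· ≠ j), lam i j * binom (θs i) n s

/-- `f_{γϑ}^n(x) = Σ_i γ_i f_{ϑ_i}^n(x)` -/
noncomputable def fmix (K : ℕ) (γ ϑ : Fin K → ℝ) (n : ℕ) (x : Fin n → Bool) : ℝ :=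
  ∑ i, γ i * fpow (ϑ i) n x

/-- `g_{γϑ}^n(s) = Σ_i γ_i g_{ϑ_i}^n(s)` -/
noncomputable def gmix (K : ℕ) (γ ϑ : Fin K → ℝ) (n s : ℕ) : ℝ :=
  ∑ i, γ i * binom (ϑ i) n s

/-- the backward recursion `V_n^N`: `V_N^N = v_N` and
`V_{n}^N = min{v_{n}, f_{γϑ}^{n} + 𝓘_{n+1} V_{n+1}^N}` for `n < N`, where
`(𝓘_{n+1} V)(x) = V(x,0) + V(x,1)` (the operator `𝓘` is integration with respect to
counting measure on `{0,1}`). -/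
noncomputable def V (k : ℕ) (θs : Fin k → ℝ) (lam : Fin k → Fin k → ℝ)
    (K : ℕ) (γ ϑ : Fin K → ℝ) (N : ℕ) : (n : ℕ) → (Fin n → Bool) → ℝ :=
  fun n x =>
    if _h : n < N then
      min (vfun k θs lam n x)
        (fmix K γ ϑ n x +
          (V k θs lam K γ ϑ N (n + 1) (Fin.snoc x false) +
            V k θs lam K γ ϑ N (n + 1) (Fin.snoc x true)))
    else vfun k θs lam n x
  termination_by n => N - n

/-- the backward recursion `U_n^N`: `U_N^N = u_N` and
`U_{n}^N(s) = min{u_{n}(s), g_{γϑ}^{n}(s) + (𝒥_{n+1} U_{n+1}^N)(s)}` for `n < N`, where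
`(𝒥_{n+1} U)(s) = U(s)·(n+1-s)/(n+1) + U(s+1)·(s+1)/(n+1)`. -/
noncomputable def U (k : ℕ) (θs : Fin k → ℝ) (lam : Fin k → Fin k → ℝ)
    (K : ℕ) (γ ϑ : Fin K → ℝ) (N : ℕ) : ℕ → ℕ → ℝ :=
  fun n s =>
    if _h : n < N then
      min (ufun k θs lam n s)
        (gmix K γ ϑ n s +
          (U k θs lam K γ ϑ N (n + 1) s * ((n + 1 - s : ℕ) : ℝ) / (n + 1) +
            U k θs lam K γ ϑ N (n + 1) (s + 1) * ((s + 1 : ℕ) : ℝ) / (n + 1)))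
    else ufun k θs lam n s
  termination_by n _s => N - n

section Aux

lemma count_le {n : ℕ} (x : Fin n → Bool) : count x ≤ n := by
  simpa [count] using (Finset.card_filter_le Finset.univ fun i => x i)

lemma count_snoc {n : ℕ} (x : Fin n → Bool) (b : Bool) :
    count (Fin.snoc x b : Fin (n + 1) → Bool) = count x + (if b then 1 else 0) := by
  simp only [count, Finset.card_filter]
  rw [Fin.sum_univ_castSucc]
  simp

lemma binom_eq {θ : ℝ} {n : ℕ} (x : Fin n → Bool) :
    binom θ n (count x) = (n.choose (count x) : ℝ) * fpow θ n x := by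
  simp [binom, fpow, mul_assoc]

lemma ufun_eq (k : ℕ) (θs : Fin k → ℝ) (lam : Fin k → Fin k → ℝ)
    {n : ℕ} (x : Fin n → Bool) :
    ufun k θs lam n (count x) = (n.choose (count x) : ℝ) * vfun k θs lam n x := by
  rw [vfun, Real.mul_iInf_of_nonneg (by positivity)]
  unfold ufun
  congr 1; ext j
  rw [Finset.mul_sum]
  refine Finset.sum_congr rfl fun i _ => ?_
  rw [binom_eq]; ring

lemma gmix_eq (K : ℕ) (γ ϑ : Fin K → ℝ) {n : ℕ} (x : Fin n → Bool) :
    gmix K γ ϑ n (count x) = (n.choose (count x) : ℝ) * fmix K γ ϑ n x := by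
  unfold gmix fmix
  rw [Finset.mul_sum]
  refine Finset.sum_congr rfl fun i _ => ?_
  rw [binom_eq]; ring

lemma choose_cast_left (n s : ℕ) :
    (((n + 1).choose s : ℕ) : ℝ) * ((n + 1 - s : ℕ) : ℝ) / ((n : ℝ) + 1)
      = (n.choose s : ℝ) := by
  rw [div_eq_iff (by positivity)]
  exact_mod_cast (Nat.choose_mul_succ_eq n s).symm

lemma choose_cast_right (n s : ℕ) :
    (((n + 1).choose (s + 1) : ℕ) : ℝ) * ((s + 1 : ℕ) : ℝ) / ((n : ℝ) + 1)
      = (n.choose s : ℝ) := by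
  rw [div_eq_iff (by positivity)]
  have h : (n + 1).choose (s + 1) * (s + 1) = n.choose s * (n + 1) := by
    rw [← Nat.add_one_mul_choose_eq]; ring
  exact_mod_cast h

lemma key (k : ℕ) (θs : Fin k → ℝ) (lam : Fin k → Fin k → ℝ)
    (K : ℕ) (γ ϑ : Fin K → ℝ) (N : ℕ) :
    ∀ d n, N - n ≤ d → ∀ x : Fin n → Bool,
      U k θs lam K γ ϑ N n (count x)
        = (n.choose (count x) : ℝ) * V k θs lam K γ ϑ N n x := by
  intro d
  induction d with
  | zero =>
    intro n hn x
    have hnN : ¬ n < N := by omega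
    rw [U, V, dif_neg hnN, dif_neg hnN, ufun_eq]
  | succ d ih =>
    intro n hn x
    by_cases hnN : n < N
    · have h0 : count (Fin.snoc x false : Fin (n + 1) → Bool) = count x := by
        simp [count_snoc]
      have h1 : count (Fin.snoc x true : Fin (n + 1) → Bool) = count x + 1 := by
        simp [count_snoc]
      have e0 := ih (n + 1) (by omega) (Fin.snoc x false)
      have e1 := ih (n + 1) (by omega) (Fin.snoc x true)
      rw [h0] at e0
      rw [h1] at e1
      rw [U, V, dif_pos hnN, dif_pos hnN, ufun_eq, gmix_eq,
        mul_min_of_nonneg _ _ (by positivity : (0:ℝ) ≤ (n.choose (count x) : ℝ))]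
      congr 1
      have c0 := choose_cast_left n (count x)
      have c1 := choose_cast_right n (count x)
      rw [e0, e1]
      linear_combination (V k θs lam K γ ϑ N (n + 1) (Fin.snoc x false)) * c0 +
        (V k θs lam K γ ϑ N (n + 1) (Fin.snoc x true)) * c1
    · rw [U, V, dif_neg hnN, dif_neg hnN, ufun_eq]

end Aux

/-- **Proposition 1**: for every `m = 1, …, N−1` and every `x ∈ {0,1}^m` with
`s_m = s_m(x)`, one has
`(𝒥_{m+1} U_{m+1}^N)(s_m) = C(m, s_m) · (𝓘_{m+1} V_{m+1}^N)(x)`. -/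
theorem stmt0 (k : ℕ) (hk : 2 ≤ k) (θs : Fin k → ℝ)
    (hθ : ∀ i, θs i ∈ Set.Icc (0 : ℝ) 1)
    (lam : Fin k → Fin k → ℝ) (hlam : ∀ i j, 0 ≤ lam i j)
    (K : ℕ) (hK : 1 ≤ K) (γ ϑ : Fin K → ℝ)
    (hγ : ∀ i, 0 ≤ γ i) (hγ1 : ∑ i, γ i = 1)
    (hϑ : ∀ i, ϑ i ∈ Set.Icc (0 : ℝ) 1)
    (N : ℕ) (hN : 2 ≤ N)
    (m : ℕ) (hm : 1 ≤ m) (hmN : m ≤ N - 1) (x : Fin m → Bool) :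
    U k θs lam K γ ϑ N (m + 1) (count x) * ((m + 1 - count x : ℕ) : ℝ) / (m + 1) +
        U k θs lam K γ ϑ N (m + 1) (count x + 1) * ((count x + 1 : ℕ) : ℝ) / (m + 1) =
      (m.choose (count x) : ℝ) *
        (V k θs lam K γ ϑ N (m + 1) (Fin.snoc x false) +
          V k θs lam K γ ϑ N (m + 1) (Fin.snoc x true)) := by
  have h0 : count (Fin.snoc x false : Fin (m + 1) → Bool) = count x := by
    simp [count_snoc]
  have h1 : count (Fin.snoc x true : Fin (m + 1) → Bool) = count x + 1 := by
    simp [count_snoc]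
  have e0 := key k θs lam K γ ϑ N (N - m) (m + 1) (by omega) (Fin.snoc x false)
  have e1 := key k θs lam K γ ϑ N (N - m) (m + 1) (by omega) (Fin.snoc x true)
  rw [h0] at e0
  rw [h1] at e1
  have c0 := choose_cast_left m (count x)
  have c1 := choose_cast_right m (count x)
  rw [e0, e1]
  linear_combination (V k θs lam K γ ϑ N (m + 1) (Fin.snoc x false)) * c0 +
    (V k θs lam K γ ϑ N (m + 1) (Fin.snoc x true)) * c1
end

section
/- Let θ ∈ [0,1], N ≥ 1, and let ⟨ψ,φ⟩ be a sequential test based on the sufficient statistic with ψ ∈ 𝒮^N. Define a_j^N(s;θ) = g_θ^N(s) φ_N^j(s) for 0 ≤ s ≤ N, and recursively for n = N−1,…,1 and 0 ≤ s ≤ n: a_j^n(s;θ) = g_θ^n(s) ψ_n(s) φ_n^j(s) + [a_j^{n+1}(s;θ)·(n+1−s)/(n+1) + a_j^{n+1}(s+1;θ)·(s+1)/(n+1)]·(1−ψ_n(s)). Then for each j = 1,…,k, a_j^1(0;θ) + a_j^1(1;θ) = Σ_{n=1}^N Σ_{x∈{0,1}^n} s_n^ψ(x) φ_n^j(s_n(x))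 θ^{s_n(x)}(1−θ)^{n−s_n(x)}, i.e., the recursion computes the probability of accepting hypothesis H_j under parameter θ. (Proposition 2.) -/
open scoped BigOperators

/-- `s_m(x)`: number of successes among the first `m` coordinates of `x ∈ {0,1}^n` -/
def prefixCount {n : ℕ} (x : Fin n → Bool) (m : ℕ) : ℕ :=
  (Finset.univ.filter fun i : Fin n => i.val < m ∧ x i).card

/-- `s_n^ψ(x) = (∏_{m=1}^{n-1} (1-ψ_m(s_m(x)))) · ψ_n(s_n(x))`, for a stopping rule `ψ`
based on the sufficient statistic -/
noncomputable def sstop (ψ : ℕ → ℕ → ℝ) (n : ℕ) (x : Fin n → Bool) : ℝ :=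
  (∏ m ∈ Finset.range (n - 1), (1 - ψ (m + 1) (prefixCount x (m + 1)))) *
    ψ n (prefixCount x n)

/-- `ψ ∈ 𝒮^N`: the stopping rule is truncated at `N`, i.e.
`∏_{n=1}^N (1-ψ_n(s_n(x))) = 0` for every `x ∈ {0,1}^N`. -/
def TruncatedAt (ψ : ℕ → ℕ → ℝ) (N : ℕ) : Prop :=
  ∀ x : Fin N → Bool, ∏ n ∈ Finset.range N, (1 - ψ (n + 1) (prefixCount x (n + 1))) = 0

/-- the backward recursion for acceptance probabilities:
`a_j^N(s;θ) = g_θ^N(s) φ_N^j(s)` and, for `n < N`,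
`a_j^n(s;θ) = g_θ^n(s) ψ_n(s) φ_n^j(s)
  + [a_j^{n+1}(s;θ)·(n+1−s)/(n+1) + a_j^{n+1}(s+1;θ)·(s+1)/(n+1)]·(1−ψ_n(s))`. -/
noncomputable def arec {k : ℕ} (θ : ℝ) (ψ : ℕ → ℕ → ℝ) (φ : ℕ → ℕ → Fin k → ℝ)
    (j : Fin k) (N : ℕ) : ℕ → ℕ → ℝ :=
  fun n s =>
    if _h : n < N then
      binom θ n s * ψ n s * φ n s j +
        (arec θ ψ φ j N (n + 1) s * ((n + 1 - s : ℕ) : ℝ) / (n + 1) +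
            arec θ ψ φ j N (n + 1) (s + 1) * ((s + 1 : ℕ) : ℝ) / (n + 1)) *
          (1 - ψ n s)
    else binom θ n s * φ n s j
  termination_by n _s => N - n

/- ------------------ auxiliary development ------------------ -/

lemma prefixCount_ge {n : ℕ} (x : Fin n → Bool) {m : ℕ} (h : n ≤ m) :
    prefixCount x m = prefixCount x n := by
  unfold prefixCount
  congr 1
  apply Finset.filter_congr
  intro i _
  simp only [eq_iff_iff, and_congr_left_iff]
  intro _
  constructor <;> intro <;> [exact i.isLt; exact lt_of_lt_of_le i.isLt h]

lemma prefixCount_snoc {n : ℕ} (x : Fin n → Bool) (b : Bool) (m : ℕ) :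
    prefixCount (Fin.snoc x b) m = prefixCount x m + (if n < m ∧ b = true then 1 else 0) := by
  unfold prefixCount
  rw [Finset.card_filter, Finset.card_filter, Fin.sum_univ_castSucc]
  simp [Fin.snoc_castSucc, Fin.snoc_last, Fin.last, Fin.snoc]

def snocEquiv (n : ℕ) : (Fin n → Bool) × Bool ≃ (Fin (n+1) → Bool) where
  toFun p := Fin.snoc p.1 p.2
  invFun y := (Fin.init y, y (Fin.last n))
  left_inv p := by simp [Fin.init_snoc, Fin.snoc_last]
  right_inv y := Fin.snoc_init_self y

/-- the recursion without the binomial coefficients (per-path version) -/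
noncomputable def abar {k : ℕ} (θ : ℝ) (ψ : ℕ → ℕ → ℝ) (φ : ℕ → ℕ → Fin k → ℝ)
    (j : Fin k) (N : ℕ) : ℕ → ℕ → ℝ :=
  fun n s =>
    if _h : n < N then
      θ ^ s * (1 - θ) ^ (n - s) * ψ n s * φ n s j +
        (abar θ ψ φ j N (n + 1) s + abar θ ψ φ j N (n + 1) (s + 1)) * (1 - ψ n s)
    else θ ^ s * (1 - θ) ^ (n - s) * φ n s j
  termination_by n _s => N - n

lemma arec_eq_choose_mul_abar {k : ℕ} (θ : ℝ) (ψ : ℕ → ℕ → ℝ) (φ : ℕ → ℕ → Fin k → ℝ)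
    (j : Fin k) (N : ℕ) :
    ∀ d n s, N - n = d → arec θ ψ φ j N n s = (n.choose s : ℝ) * abar θ ψ φ j N n s := by
  intro d
  induction d with
  | zero =>
    intro n s hd
    have h : ¬ n < N := by omega
    rw [arec, abar, dif_neg h, dif_neg h, binom]
    ring
  | succ d ih =>
    intro n s hd
    have h : n < N := by omega
    have hd' : N - (n + 1) = d := by omega
    rw [arec, abar, dif_pos h, dif_pos h, ih (n+1) s hd', ih (n+1) (s+1) hd']
    have hne : ((n : ℝ) + 1) ≠ 0 := by positivity
    have c1 : ((n+1).choose s : ℝ) * ((n + 1 - s : ℕ) : ℝ) / (n + 1) = (n.choose s : ℝ) := by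
      have := Nat.choose_mul_succ_eq n s
      have h2 : ((n.choose s * (n+1) : ℕ) : ℝ) = (((n+1).choose s * (n + 1 - s) : ℕ) : ℝ) := by
        exact_mod_cast congrArg (Nat.cast (R := ℝ)) this
      push_cast at h2
      field_simp
      linarith [h2]
    have c2 : ((n+1).choose (s+1) : ℝ) * ((s + 1 : ℕ) : ℝ) / (n + 1) = (n.choose s : ℝ) := by
      have := Nat.add_one_mul_choose_eq n s
      have h2 : (((n+1) * n.choose s : ℕ) : ℝ) = (((n+1).choose (s+1) * (s+1) : ℕ) : ℝ) := by
        exact_mod_cast congrArg (Nat.cast (R := ℝ)) this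
      push_cast at h2
      field_simp
      push_cast
      linarith [h2]
    rw [binom]
    linear_combination (abar θ ψ φ j N (n+1) s * (1 - ψ n s)) * c1 +
      (abar θ ψ φ j N (n+1) (s+1) * (1 - ψ n s)) * c2

lemma key_s2 {k : ℕ} (θ : ℝ) (ψ : ℕ → ℕ → ℝ) (φ : ℕ → ℕ → Fin k → ℝ) (j : Fin k) (N : ℕ)
    (htrunc : TruncatedAt ψ N) :
    ∀ d n, n + d = N → 1 ≤ n →
      (∑ x : Fin n → Bool,
          (∏ m ∈ Finset.range (n - 1), (1 - ψ (m + 1) (prefixCount x (m + 1)))) *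
            abar θ ψ φ j N n (prefixCount x n))
      = ∑ m ∈ Finset.Icc n N, ∑ x : Fin m → Bool,
          sstop ψ m x * φ m (prefixCount x m) j *
            (θ ^ prefixCount x m * (1 - θ) ^ (m - prefixCount x m)) := by
  intro d
  induction d with
  | zero =>
    intro n hd hn
    have hnN : n = N := by omega
    subst hnN
    rw [Finset.Icc_self, Finset.sum_singleton]
    obtain ⟨M, rfl⟩ : ∃ M, n = M + 1 := ⟨n - 1, by omega⟩
    apply Finset.sum_congr rfl
    intro x _
    have h0 : (∏ m ∈ Finset.range M, (1 - ψ (m + 1) (prefixCount x (m + 1)))) *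
        (1 - ψ (M + 1) (prefixCount x (M + 1))) = 0 := by
      have := htrunc x
      rwa [Finset.prod_range_succ] at this
    rw [abar, dif_neg (lt_irrefl (M + 1)), sstop]
    have : (M + 1 - 1) = M := by omega
    rw [this]
    set P := ∏ m ∈ Finset.range M, (1 - ψ (m + 1) (prefixCount x (m + 1)))
    set pc := prefixCount x (M + 1)
    -- P * (θ^pc (1-θ)^(M+1-pc) φ) = P ψ φ (θ^pc (1-θ)^(M+1-pc)) given P(1-ψ)=0
    linear_combination (θ ^ pc * (1 - θ) ^ (M + 1 - pc) * φ (M + 1) pc j) * h0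
  | succ d ih =>
    intro n hd hn
    have h : n < N := by omega
    -- split the Icc sum at the bottom
    have hnN : n ≤ N := le_of_lt h
    rw [Finset.Icc_eq_cons_Ioc hnN, Finset.sum_cons, ← Finset.Icc_add_one_left_eq_Ioc]
    rw [← ih (n + 1) (by omega) (by omega)]
    -- unfold abar at level n
    have unf : ∀ x : Fin n → Bool,
        (∏ m ∈ Finset.range (n - 1), (1 - ψ (m + 1) (prefixCount x (m + 1)))) *
          abar θ ψ φ j N n (prefixCount x n)
        = sstop ψ n x * φ n (prefixCount x n) j *
            (θ ^ prefixCount x n * (1 - θ) ^ (n - prefixCount x n)) +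
          ((∏ m ∈ Finset.range (n - 1), (1 - ψ (m + 1) (prefixCount x (m + 1)))) *
              (1 - ψ n (prefixCount x n))) *
            (abar θ ψ φ j N (n + 1) (prefixCount x n) +
             abar θ ψ φ j N (n + 1) (prefixCount x n + 1)) := by
      intro x
      rw [abar, dif_pos h, sstop]
      ring
    rw [Finset.sum_congr rfl (fun x _ => unf x), Finset.sum_add_distrib]
    congr 1
    -- now the second sum equals the (n+1)-level sum, via the snoc bijection
    rw [← Equiv.sum_comp (snocEquiv n), Fintype.sum_prod_type]
    apply Finset.sum_congr rfl
    intro x _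
    have hP : ∀ b : Bool,
        (∏ m ∈ Finset.range ((n + 1) - 1),
            (1 - ψ (m + 1) (prefixCount (snocEquiv n (x, b)) (m + 1))))
        = (∏ m ∈ Finset.range (n - 1), (1 - ψ (m + 1) (prefixCount x (m + 1)))) *
            (1 - ψ n (prefixCount x n)) := by
      intro b
      have hsimp : ∀ m ∈ Finset.range n,
          (1 - ψ (m + 1) (prefixCount (snocEquiv n (x, b)) (m + 1)))
          = (1 - ψ (m + 1) (prefixCount x (m + 1))) := by
        intro m hm
        rw [Finset.mem_range] at hm
        show (1 - ψ (m + 1) (prefixCount (Fin.snoc x b) (m + 1))) = _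
        rw [prefixCount_snoc]
        have : ¬ (n < m + 1 ∧ b = true) := by rintro ⟨h1, _⟩; omega
        rw [if_neg this]
        norm_num
      have h1 : ((n + 1) - 1) = n := by omega
      rw [h1, Finset.prod_congr rfl hsimp]
      obtain ⟨M, rfl⟩ : ∃ M, n = M + 1 := ⟨n - 1, by omega⟩
      rw [Finset.prod_range_succ]
      simp
    have hpcT : prefixCount (snocEquiv n (x, true)) (n + 1) = prefixCount x n + 1 := by
      show prefixCount (Fin.snoc x true) (n + 1) = _
      rw [prefixCount_snoc, prefixCount_ge x (Nat.le_succ n)]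
      norm_num
    have hpcF : prefixCount (snocEquiv n (x, false)) (n + 1) = prefixCount x n := by
      show prefixCount (Fin.snoc x false) (n + 1) = _
      rw [prefixCount_snoc, prefixCount_ge x (Nat.le_succ n)]
      norm_num
    rw [Fintype.sum_bool, hP true, hP false, hpcT, hpcF]
    ring

/-- **Proposition 2**: for a sequential test `⟨ψ,φ⟩` based on the sufficient statistic
with `ψ ∈ 𝒮^N`, the recursion `a_j^n` computes the probability of accepting
hypothesis `H_j` under parameter `θ`:
`a_j^1(0;θ) + a_j^1(1;θ)
  = Σ_{n=1}^N Σ_{x∈{0,1}^n} s_n^ψ(x) φ_n^j(s_n(x)) θ^{s_n(x)}(1−θ)^{n−s_n(x)}`. -/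
theorem stmt2 (k : ℕ) (hk : 2 ≤ k) (θ : ℝ) (hθ : θ ∈ Set.Icc (0 : ℝ) 1)
    (N : ℕ) (hN : 1 ≤ N)
    (ψ : ℕ → ℕ → ℝ) (hψ : ∀ n s, ψ n s ∈ Set.Icc (0 : ℝ) 1)
    (φ : ℕ → ℕ → Fin k → ℝ) (hφ : ∀ n s j, φ n s j ∈ Set.Icc (0 : ℝ) 1)
    (hφsum : ∀ n s, ∑ j, φ n s j = 1)
    (htrunc : TruncatedAt ψ N) (j : Fin k) :
    arec θ ψ φ j N 1 0 + arec θ ψ φ j N 1 1 =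
      ∑ n ∈ Finset.Icc 1 N, ∑ x : Fin n → Bool,
        sstop ψ n x * φ n (prefixCount x n) j *
          (θ ^ prefixCount x n * (1 - θ) ^ (n - prefixCount x n)) := by
  have e0 := arec_eq_choose_mul_abar θ ψ φ j N (N - 1) 1 0 rfl
  have e1 := arec_eq_choose_mul_abar θ ψ φ j N (N - 1) 1 1 rfl
  rw [e0, e1]
  simp only [Nat.choose_self, Nat.choose_zero_right, Nat.cast_one, one_mul]
  rw [← key_s2 θ ψ φ j N htrunc (N - 1) 1 (by omega) le_rfl]
  rw [← Equiv.sum_comp (Equiv.funUnique (Fin 1) Bool).symm, Fintype.sum_bool]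
  have pcT : prefixCount ((Equiv.funUnique (Fin 1) Bool).symm true) 1 = 1 := by decide
  have pcF : prefixCount ((Equiv.funUnique (Fin 1) Bool).symm false) 1 = 0 := by decide
  rw [pcT, pcF]
  simp
  ring
end

section
/- Let θ ∈ [0,1], m ≥ 1, and let ψ be a stopping rule based on the sufficient statistic. Define b_m^m(s;θ) = g_θ^m(s)(1−ψ_m(s)) for 0 ≤ s ≤ m, and recursively for n = m−1,…,1 and 0 ≤ s ≤ n: b_n^m(s;θ) = [b_{n+1}^m(s;θ)·(n+1−s)/(n+1) + b_{n+1}^m(s+1;θ)·(s+1)/(n+1)]·(1−ψ_n(s)). Then b_1^m(0;θ) + b_1^m(1;θ) = Σ_{x∈{0,1}^m} [∏_{n=1}^m (1−ψ_n(s_n(x)))] · θ^{s_m(x)}(1−θ)^{m−s_m(x)}, i.e., the recursion computes P_θ(τ_ψ > m), the probability that the test does not stop at any step 1,…,m. (Proposition 3.) -/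
open scoped BigOperators

/-- the backward recursion for non-stopping probabilities:
`b_m^m(s;θ) = g_θ^m(s)(1−ψ_m(s))` and, for `n < m`,
`b_n^m(s;θ) = [b_{n+1}^m(s;θ)·(n+1−s)/(n+1) + b_{n+1}^m(s+1;θ)·(s+1)/(n+1)]·(1−ψ_n(s))`. -/
noncomputable def brec (θ : ℝ) (ψ : ℕ → ℕ → ℝ) (m : ℕ) : ℕ → ℕ → ℝ :=
  fun n s =>
    if _h : n < m then
      (brec θ ψ m (n + 1) s * ((n + 1 - s : ℕ) : ℝ) / (n + 1) +
          brec θ ψ m (n + 1) (s + 1) * ((s + 1 : ℕ) : ℝ) / (n + 1)) *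
        (1 - ψ n s)
    else binom θ n s * (1 - ψ n s)
  termination_by n _s => m - n


lemma pc_zero {n : ℕ} (y : Fin n → Bool) : prefixCount y 0 = 0 := by
  simp [prefixCount]

lemma pc_le {n : ℕ} (y : Fin n → Bool) (m : ℕ) : prefixCount y m ≤ n := by
  classical
  exact (Finset.card_filter_le _ _).trans (by simp)

lemma pc_cons {d : ℕ} (b : Bool) (y : Fin d → Bool) (k : ℕ) :
    prefixCount (Fin.cons b y) (k + 1) = (if b then 1 else 0) + prefixCount y k := by
  classical
  unfold prefixCount
  rw [Finset.card_filter, Finset.card_filter, Fin.sum_univ_succ]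
  simp [Fin.cons_succ, Nat.succ_lt_succ_iff]

lemma pc_cons_false {d : ℕ} (y : Fin d → Bool) (k : ℕ) :
    prefixCount (Fin.cons false y) (k + 1) = prefixCount y k := by
  rw [pc_cons]; simp

lemma pc_cons_true {d : ℕ} (y : Fin d → Bool) (k : ℕ) :
    prefixCount (Fin.cons true y) (k + 1) = 1 + prefixCount y k := by
  rw [pc_cons]; simp

noncomputable def Gfun (θ : ℝ) (ψ : ℕ → ℕ → ℝ) (n s d : ℕ) : ℝ :=
  ∑ y : Fin d → Bool,
    (∏ k ∈ Finset.range d, (1 - ψ (n + k + 1) (s + prefixCount y (k + 1)))) *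
      (θ ^ prefixCount y d * (1 - θ) ^ (d - prefixCount y d))

lemma Gfun_zero (θ : ℝ) (ψ : ℕ → ℕ → ℝ) (n s : ℕ) : Gfun θ ψ n s 0 = 1 := by
  simp [Gfun, pc_zero]

lemma Gfun_succ (θ : ℝ) (ψ : ℕ → ℕ → ℝ) (n s d : ℕ) :
    Gfun θ ψ n s (d + 1) =
      (1 - θ) * (1 - ψ (n + 1) s) * Gfun θ ψ (n + 1) s d +
        θ * (1 - ψ (n + 1) (s + 1)) * Gfun θ ψ (n + 1) (s + 1) d := by
  classical
  rw [Gfun, ← Equiv.sum_comp (Fin.consEquiv (fun _ : Fin (d + 1) => Bool)),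
    Fintype.sum_prod_type, Fintype.sum_bool]
  have keyT : ∀ y : Fin d → Bool,
      (∏ k ∈ Finset.range (d + 1),
          (1 - ψ (n + k + 1) (s + prefixCount (Fin.cons true y : Fin (d+1) → Bool) (k + 1)))) *
        (θ ^ prefixCount (Fin.cons true y : Fin (d+1) → Bool) (d + 1) *
          (1 - θ) ^ (d + 1 - prefixCount (Fin.cons true y : Fin (d+1) → Bool) (d + 1))) =
      θ * (1 - ψ (n + 1) (s + 1)) *
        ((∏ k ∈ Finset.range d,
            (1 - ψ (n + 1 + k + 1) (s + 1 + prefixCount y (k + 1)))) *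
          (θ ^ prefixCount y d * (1 - θ) ^ (d - prefixCount y d))) := by
    intro y
    rw [Finset.prod_range_succ']
    simp only [pc_cons_true, pc_zero, Nat.add_zero]
    rw [show d + 1 - (1 + prefixCount y d) = d - prefixCount y d by omega,
      show (1 + prefixCount y d) = prefixCount y d + 1 by omega, pow_succ]
    have : (∏ k ∈ Finset.range d, (1 - ψ (n + (k + 1) + 1) (s + (1 + prefixCount y (k + 1)))))
        = ∏ k ∈ Finset.range d, (1 - ψ (n + 1 + k + 1) (s + 1 + prefixCount y (k + 1))) := by
      apply Finset.prod_congr rfl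
      intro k _
      congr 2 <;> omega
    rw [this]
    ring
  have keyF : ∀ y : Fin d → Bool,
      (∏ k ∈ Finset.range (d + 1),
          (1 - ψ (n + k + 1) (s + prefixCount (Fin.cons false y : Fin (d+1) → Bool) (k + 1)))) *
        (θ ^ prefixCount (Fin.cons false y : Fin (d+1) → Bool) (d + 1) *
          (1 - θ) ^ (d + 1 - prefixCount (Fin.cons false y : Fin (d+1) → Bool) (d + 1))) =
      (1 - θ) * (1 - ψ (n + 1) s) *
        ((∏ k ∈ Finset.range d,
            (1 - ψ (n + 1 + k + 1) (s + prefixCount y (k + 1)))) *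
          (θ ^ prefixCount y d * (1 - θ) ^ (d - prefixCount y d))) := by
    intro y
    rw [Finset.prod_range_succ']
    simp only [pc_cons_false, pc_zero, Nat.add_zero]
    rw [show d + 1 - prefixCount y d = (d - prefixCount y d) + 1 by
        have := pc_le y d; omega, pow_succ]
    have : (∏ k ∈ Finset.range d, (1 - ψ (n + (k + 1) + 1) (s + prefixCount y (k + 1))))
        = ∏ k ∈ Finset.range d, (1 - ψ (n + 1 + k + 1) (s + prefixCount y (k + 1))) := by
      apply Finset.prod_congr rfl
      intro k _
      congr 2 <;> omega
    rw [this]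
    ring
  simp only [Fin.consEquiv, Equiv.coe_fn_mk]
  rw [Finset.sum_congr rfl (fun y _ => keyT y), Finset.sum_congr rfl (fun y _ => keyF y),
    ← Finset.mul_sum, ← Finset.mul_sum]
  rw [Gfun, Gfun]
  ring

lemma brec_eq (θ : ℝ) (ψ : ℕ → ℕ → ℝ) :
    ∀ d n s, brec θ ψ (n + d) n s =
      (n.choose s : ℝ) * θ ^ s * (1 - θ) ^ (n - s) * (1 - ψ n s) * Gfun θ ψ n s d := by
  intro d
  induction d with
  | zero =>
    intro n s
    rw [brec, dif_neg (by omega), Gfun_zero, binom]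
    ring
  | succ d ih =>
    intro n s
    rw [brec, dif_pos (by omega)]
    rw [show n + (d + 1) = (n + 1) + d by ring]
    rw [ih (n + 1) s, ih (n + 1) (s + 1), Gfun_succ]
    have h1 : ((n + 1).choose s : ℝ) * ((n + 1 - s : ℕ) : ℝ) = (n.choose s : ℝ) * (n + 1) := by
      have := Nat.choose_mul_succ_eq n s
      have h := congrArg (fun t : ℕ => (t : ℝ)) this
      push_cast at h
      push_cast
      linarith
    have h2 : ((n + 1).choose (s + 1) : ℝ) * ((s + 1 : ℕ) : ℝ) = (n.choose s : ℝ) * (n + 1) := by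
      have := Nat.add_one_mul_choose_eq n s
      have h := congrArg (fun t : ℕ => (t : ℝ)) this
      push_cast at h
      push_cast
      linarith
    have hn : ((n : ℝ) + 1) ≠ 0 := by positivity
    rcases le_or_gt s n with hs | hs
    · rw [show n + 1 - s = (n - s) + 1 by omega, show n + 1 - (s + 1) = n - s by omega,
        pow_succ]
      rw [show ((n - s + 1 : ℕ) : ℝ) = (n : ℝ) - s + 1 by
        push_cast [Nat.cast_sub hs]; ring]
      have h1' : ((n + 1).choose s : ℝ) * ((n : ℝ) - s + 1) = (n.choose s : ℝ) * (n + 1) := by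
        rw [Nat.cast_sub (by omega : s ≤ n + 1)] at h1
        push_cast at h1 ⊢
        linarith
      have h2' : ((n + 1).choose (s + 1) : ℝ) * ((s : ℝ) + 1) = (n.choose s : ℝ) * (n + 1) := by
        push_cast at h2 ⊢; linarith
      field_simp
      push_cast
      linear_combination
        ((1 - θ) ^ (n - s) * (1 - θ) * θ ^ s * (1 - ψ (n + 1) s) * Gfun θ ψ (n + 1) s d *
            (1 - ψ n s)) * h1' +
        ((1 - θ) ^ (n - s) * θ ^ s * θ * (1 - ψ (n + 1) (s + 1)) * Gfun θ ψ (n + 1) (s + 1) d *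
            (1 - ψ n s)) * h2'
    · have hz : (n.choose s : ℝ) = 0 := by
        norm_cast
        exact Nat.choose_eq_zero_of_lt hs
      have hz2 : ((n+1).choose (s+1) : ℝ) = 0 := by
        norm_cast
        exact Nat.choose_eq_zero_of_lt (by omega)
      rcases eq_or_lt_of_le (Nat.succ_le_of_lt hs) with hse | hse
      · have : (n + 1 - s : ℕ) = 0 := by omega
        rw [this, hz, hz2]
        simp
      · have hz1 : ((n+1).choose s : ℝ) = 0 := by
          norm_cast
          exact Nat.choose_eq_zero_of_lt (by omega)
        rw [hz, hz1, hz2]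
        simp

/-- **Proposition 3**: the recursion `b_n^m` computes `P_θ(τ_ψ > m)`, the probability
that the test does not stop at any step `1,…,m`:
`b_1^m(0;θ) + b_1^m(1;θ)
  = Σ_{x∈{0,1}^m} [∏_{n=1}^m (1−ψ_n(s_n(x)))] θ^{s_m(x)}(1−θ)^{m−s_m(x)}`. -/
theorem stmt3 (θ : ℝ) (hθ : θ ∈ Set.Icc (0 : ℝ) 1)
    (m : ℕ) (hm : 1 ≤ m)
    (ψ : ℕ → ℕ → ℝ) (hψ : ∀ n s, ψ n s ∈ Set.Icc (0 : ℝ) 1) :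
    brec θ ψ m 1 0 + brec θ ψ m 1 1 =
      ∑ x : Fin m → Bool,
        (∏ n ∈ Finset.range m, (1 - ψ (n + 1) (prefixCount x (n + 1)))) *
          (θ ^ prefixCount x m * (1 - θ) ^ (m - prefixCount x m)) := by
  obtain ⟨d, rfl⟩ : ∃ d, m = d + 1 := ⟨m - 1, by omega⟩
  have hL : ∀ s, brec θ ψ (d + 1) 1 s =
      ((1 : ℕ).choose s : ℝ) * θ ^ s * (1 - θ) ^ (1 - s) * (1 - ψ 1 s) * Gfun θ ψ 1 s d := by
    intro s
    rw [show d + 1 = 1 + d by ring]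
    exact brec_eq θ ψ d 1 s
  have hR : (∑ x : Fin (d + 1) → Bool,
      (∏ n ∈ Finset.range (d + 1), (1 - ψ (n + 1) (prefixCount x (n + 1)))) *
        (θ ^ prefixCount x (d + 1) * (1 - θ) ^ (d + 1 - prefixCount x (d + 1))))
      = Gfun θ ψ 0 0 (d + 1) := by
    simp [Gfun]
  rw [hL 0, hL 1, hR, Gfun_succ]
  norm_num
end

section
/- (Appendix, equation (9-1).) Let (X, 𝒜, μ) be a σ-finite measure space, k ≥ 2, and let f_1,…,f_k : X → [0,∞) be measurable functions with ∫ f_i dμ = 1 for each i, such that for every i ≠ l the set {x : f_i(x) ≠ f_l(x)} has positive μ-measure. Let λ_{ij} ≥ 0 for 1 ≤ i ≠ j ≤ k. For x = (x_1,…,x_n) ∈ X^n set f_i^n(x) = ∏_{m=1}^n f_i(x_m) and v_n(x) = min_{1≤j≤k} Σ_{i≠j} λ_{ij} f_i^n(x). Then ∫_{X^n} v_n dμ^n → 0 as n → ∞, where μ^n denotes the n-fold product measure. -/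
open scoped BigOperators
open MeasureTheory Filter

private lemma prod_sqrt_aux {ι : Type*} (s : Finset ι) (a : ι → ℝ) (ha : ∀ m ∈ s, 0 ≤ a m) :
    ∏ m ∈ s, Real.sqrt (a m) = Real.sqrt (∏ m ∈ s, a m) := by
  induction s using Finset.cons_induction with
  | empty => simp
  | cons i s hi ih =>
      rw [Finset.prod_cons, Finset.prod_cons, ih (fun m hm => ha m (Finset.mem_cons_of_mem hm)),
        Real.sqrt_mul (ha i (Finset.mem_cons_self i s))]

private lemma sqrt_lt_avg {a b : ℝ} (ha : 0 ≤ a) (hb : 0 ≤ b) (hab : a ≠ b) :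
    Real.sqrt (a * b) < (a + b) / 2 := by
  have hne : a - b ≠ 0 := sub_ne_zero.2 hab
  have h0 : 0 < (a - b) ^ 2 := by positivity
  have h : a * b < ((a + b) / 2) ^ 2 := by nlinarith
  calc Real.sqrt (a * b) < Real.sqrt (((a + b) / 2) ^ 2) := by
        exact Real.sqrt_lt_sqrt (mul_nonneg ha hb) h
    _ = (a + b) / 2 := Real.sqrt_sq (by linarith)

/-- **Equation (9-1), Appendix**: if `f_1,…,f_k` are probability densities with respect
to a σ-finite measure `μ`, pairwise different on a set of positive measure, and
`λ_{ij} ≥ 0`, then with `f_i^n(x) = ∏_{m=1}^n f_i(x_m)` and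
`v_n(x) = min_{1≤j≤k} Σ_{i≠j} λ_{ij} f_i^n(x)`, one has `∫_{X^n} v_n dμ^n → 0` as
`n → ∞`. -/
theorem stmt7 {X : Type*} [MeasurableSpace X] (μ : Measure X) [SigmaFinite μ]
    (k : ℕ) (hk : 2 ≤ k) (f : Fin k → X → ℝ)
    (hmeas : ∀ i, Measurable (f i)) (hnonneg : ∀ i x, 0 ≤ f i x)
    (hint : ∀ i, ∫ x, f i x ∂μ = 1)
    (hdiff : ∀ i l, i ≠ l → 0 < μ {x | f i x ≠ f l x})
    (lam : Fin k → Fin k → ℝ) (hlam : ∀ i j, 0 ≤ lam i j) :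
    Tendsto
      (fun n : ℕ =>
        ∫ x : Fin n → X,
          (⨅ j : Fin k, ∑ i ∈ Finset.univ.filter (· ≠ j), lam i j * ∏ m, f i (x m))
            ∂(Measure.pi fun _ : Fin n => μ))
      atTop (nhds 0) := by
  letI : MeasureSpace X := ⟨μ⟩
  haveI : SigmaFinite (volume : Measure X) := ‹SigmaFinite μ›
  haveI hNE : Nonempty (Fin k) := ⟨⟨0, by omega⟩⟩
  -- integrability of each `f i`
  have hfi : ∀ i, Integrable (f i) μ := by
    intro i
    by_contra h
    have h1 := hint i
    rw [integral_undef h] at h1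
    exact one_ne_zero h1.symm
  -- the square-root densities
  set g : Fin k → Fin k → X → ℝ := fun i l x => Real.sqrt (f i x * f l x) with hg
  have hg_nonneg : ∀ i l x, 0 ≤ g i l x := fun i l x => Real.sqrt_nonneg _
  have hg_le : ∀ i l x, g i l x ≤ (f i x + f l x) / 2 := by
    intro i l x
    rcases eq_or_ne (f i x) (f l x) with h | h
    · simp only [hg, h, Real.sqrt_mul_self (hnonneg l x)]
      linarith
    · exact (sqrt_lt_avg (hnonneg i x) (hnonneg l x) h).le
  have hg_meas : ∀ i l, Measurable (g i l) := fun i l =>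
    ((hmeas i).mul (hmeas l)).sqrt
  have havg_int : ∀ i l : Fin k, Integrable (fun x => (f i x + f l x) / 2) μ := fun i l =>
    ((hfi i).add (hfi l)).div_const 2
  have hg_int : ∀ i l, Integrable (g i l) μ := by
    intro i l
    refine Integrable.mono (havg_int i l)
      (hg_meas i l).aestronglyMeasurable (Eventually.of_forall fun x => ?_)
    rw [Real.norm_eq_abs, Real.norm_eq_abs, abs_of_nonneg (hg_nonneg i l x),
      abs_of_nonneg (by have := hnonneg i x; have := hnonneg l x; linarith :
        (0:ℝ) ≤ (f i x + f l x) / 2)]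
    exact hg_le i l x
  set ρ : Fin k → Fin k → ℝ := fun i l => ∫ x, g i l x ∂μ with hρ
  have hρ_nonneg : ∀ i l, 0 ≤ ρ i l := fun i l =>
    integral_nonneg (fun x => hg_nonneg i l x)
  have hρ_lt : ∀ i l, i ≠ l → ρ i l < 1 := by
    intro i l hil
    have hd_nonneg : ∀ x, 0 ≤ (f i x + f l x) / 2 - g i l x := fun x =>
      sub_nonneg.2 (hg_le i l x)
    have hd_int : Integrable (fun x => (f i x + f l x) / 2 - g i l x) μ :=
      (havg_int i l).sub (hg_int i l)
    have hpos : 0 < ∫ x, ((f i x + f l x) / 2 - g i l x) ∂μ := by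
      rw [integral_pos_iff_support_of_nonneg hd_nonneg hd_int]
      refine lt_of_lt_of_le (hdiff i l hil) (measure_mono ?_)
      intro x hx
      have : g i l x < (f i x + f l x) / 2 :=
        sqrt_lt_avg (hnonneg i x) (hnonneg l x) hx
      simp only [Function.mem_support]
      intro h
      rw [sub_eq_zero] at h
      exact absurd h.symm (ne_of_lt this)
    rw [integral_sub (havg_int i l) (hg_int i l)] at hpos
    have havg : ∫ x, (f i x + f l x) / 2 ∂μ = 1 := by
      rw [integral_div, integral_add (hfi i) (hfi l), hint i, hint l]
      norm_num
    rw [havg] at hpos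
    linarith
  -- the dominating sequence
  set c : ℕ → ℝ := fun n =>
    ∑ j : Fin k, ∑ i ∈ Finset.univ.filter (· ≠ j), lam i j * ρ i j ^ n with hc
  have hc_tendsto : Tendsto c atTop (nhds 0) := by
    have : Tendsto (fun n : ℕ => ∑ j : Fin k,
        ∑ i ∈ Finset.univ.filter (· ≠ j), lam i j * ρ i j ^ n) atTop
        (nhds (∑ j : Fin k, ∑ i ∈ Finset.univ.filter (· ≠ j), (0:ℝ))) := by
      refine tendsto_finset_sum _ fun j _ => tendsto_finset_sum _ fun i hi => ?_
      have hij : i ≠ j := by simpa using hi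
      have : Tendsto (fun n : ℕ => ρ i j ^ n) atTop (nhds 0) :=
        tendsto_pow_atTop_nhds_zero_of_lt_one (hρ_nonneg i j) (hρ_lt i j hij)
      simpa using this.const_mul (lam i j)
    simpa using this
  refine squeeze_zero (fun n => ?_) (fun n => ?_) hc_tendsto
  · -- lower bound: the integrand is nonnegative
    refine integral_nonneg fun x => ?_
    refine le_ciInf fun j => ?_
    refine Finset.sum_nonneg fun i _ => ?_
    exact mul_nonneg (hlam i j) (Finset.prod_nonneg fun m _ => hnonneg i (x m))
  · -- upper bound
    have hvol : (Measure.pi fun _ : Fin n => μ) = (volume : Measure (Fin n → X)) :=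
      (volume_pi).symm
    rw [hvol]
    have hGint : Integrable (fun x : Fin n → X =>
        ∑ j : Fin k, ∑ i ∈ Finset.univ.filter (· ≠ j),
          lam i j * ∏ m, g i j (x m)) volume := by
      refine integrable_finset_sum _ fun j _ => integrable_finset_sum _ fun i _ => ?_
      exact (Integrable.fintype_prod (f := fun _ : Fin n => g i j)
        (fun _ => hg_int i j)).const_mul _
    have hle : ∀ x : Fin n → X,
        (⨅ j : Fin k, ∑ i ∈ Finset.univ.filter (· ≠ j), lam i j * ∏ m, f i (x m)) ≤
        ∑ j : Fin k, ∑ i ∈ Finset.univ.filter (· ≠ j), lam i j * ∏ m, g i j (x m) := by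
      intro x
      obtain ⟨j₀, -, hj₀⟩ := Finset.exists_max_image Finset.univ
        (fun j : Fin k => ∏ m, f j (x m)) Finset.univ_nonempty
      have h1 : (⨅ j : Fin k, ∑ i ∈ Finset.univ.filter (· ≠ j),
          lam i j * ∏ m, f i (x m)) ≤
          ∑ i ∈ Finset.univ.filter (· ≠ j₀), lam i j₀ * ∏ m, f i (x m) :=
        ciInf_le (Set.Finite.bddBelow (Set.finite_range _)) j₀
      have h2 : ∑ i ∈ Finset.univ.filter (· ≠ j₀), lam i j₀ * ∏ m, f i (x m) ≤
          ∑ i ∈ Finset.univ.filter (· ≠ j₀), lam i j₀ * ∏ m, g i j₀ (x m) := by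
        refine Finset.sum_le_sum fun i _ => ?_
        refine mul_le_mul_of_nonneg_left ?_ (hlam i j₀)
        have hfx : ∀ l : Fin k, (0:ℝ) ≤ ∏ m, f l (x m) := fun l =>
          Finset.prod_nonneg fun m _ => hnonneg l (x m)
        calc ∏ m, f i (x m)
            = Real.sqrt ((∏ m, f i (x m)) * (∏ m, f i (x m))) :=
              (Real.sqrt_mul_self (hfx i)).symm
          _ ≤ Real.sqrt ((∏ m, f i (x m)) * (∏ m, f j₀ (x m))) := by
              exact Real.sqrt_le_sqrt (mul_le_mul_of_nonneg_left
                (hj₀ i (Finset.mem_univ i)) (hfx i))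
          _ = ∏ m, g i j₀ (x m) := by
              rw [← Finset.prod_mul_distrib,
                ← prod_sqrt_aux Finset.univ _ (fun m _ =>
                  mul_nonneg (hnonneg i (x m)) (hnonneg j₀ (x m)))]
      have h3 : ∑ i ∈ Finset.univ.filter (· ≠ j₀), lam i j₀ * ∏ m, g i j₀ (x m) ≤
          ∑ j : Fin k, ∑ i ∈ Finset.univ.filter (· ≠ j),
            lam i j * ∏ m, g i j (x m) := by
        refine Finset.single_le_sum (f := fun j => ∑ i ∈ Finset.univ.filter (· ≠ j),
          lam i j * ∏ m, g i j (x m)) (fun j _ => ?_) (Finset.mem_univ j₀)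
        exact Finset.sum_nonneg fun i _ => mul_nonneg (hlam i j)
          (Finset.prod_nonneg fun m _ => hg_nonneg i j (x m))
      exact h1.trans (h2.trans h3)
    calc ∫ x : Fin n → X,
        (⨅ j : Fin k, ∑ i ∈ Finset.univ.filter (· ≠ j), lam i j * ∏ m, f i (x m))
          ≤ ∫ x : Fin n → X, ∑ j : Fin k, ∑ i ∈ Finset.univ.filter (· ≠ j),
              lam i j * ∏ m, g i j (x m) := by
          refine integral_mono_of_nonneg (Eventually.of_forall fun x => ?_) hGint
            (Eventually.of_forall hle)
          refine le_ciInf fun j => Finset.sum_nonneg fun i _ =>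
            mul_nonneg (hlam i j) (Finset.prod_nonneg fun m _ => hnonneg i (x m))
      _ = c n := by
          rw [integral_finset_sum (μ := volume) _ (fun j _ => integrable_finset_sum _ fun i _ =>
            (Integrable.fintype_prod (f := fun _ : Fin n => g i j)
              (fun _ => hg_int i j)).const_mul _)]
          refine Finset.sum_congr rfl fun j _ => ?_
          rw [integral_finset_sum (μ := volume) _ (fun i _ =>
            (Integrable.fintype_prod (f := fun _ : Fin n => g i j)
              (fun _ => hg_int i j)).const_mul _)]
          refine Finset.sum_congr rfl fun i _ => ?_
          rw [integral_const_mul _, ← hvol, integral_fintype_prod_eq_pow (g i j), Fintype.card_fin]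
end

section
/- Let k ≥ 2, let θ_1,…,θ_k ∈ [0,1] be pairwise distinct, and let λ_{ij} ≥ 0 for 1 ≤ i ≠ j ≤ k. Then Σ_{s=0}^n min_{1≤j≤k} Σ_{i≠j} λ_{ij} C(n,s) θ_i^s (1−θ_i)^{n−s} → 0 as n → ∞. (Bernoulli instance of equation (9-1): the integral of v_n equals the sum over s of u_n(s).) -/
open scoped BigOperators
open Filter

private noncomputable def gg (p : ℝ) (n s : ℕ) : ℝ :=
  (n.choose s : ℝ) * p ^ s * (1 - p) ^ (n - s)

private lemma gg_nonneg {p : ℝ} (hp : p ∈ Set.Icc (0:ℝ) 1) (n s : ℕ) : 0 ≤ gg p n s := by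
  obtain ⟨h0, h1⟩ := hp
  have : (0:ℝ) ≤ 1 - p := by linarith
  unfold gg
  positivity

private lemma gg_variance (p : ℝ) (n : ℕ) :
    ∑ s ∈ Finset.range (n + 1), ((n:ℝ) * p - s) ^ 2 * gg p n s = n * p * (1 - p) := by
  have h := bernsteinPolynomial.variance (R := ℝ) n
  have := congrArg (Polynomial.eval p) h
  simpa [Polynomial.eval_finset_sum, bernsteinPolynomial, gg, nsmul_eq_mul,
    mul_comm, mul_assoc, mul_left_comm] using this

private lemma pair_tendsto {p q : ℝ} (hp : p ∈ Set.Icc (0:ℝ) 1) (hq : q ∈ Set.Icc (0:ℝ) 1)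
    (hne : p ≠ q) :
    Tendsto (fun n : ℕ => ∑ s ∈ Finset.range (n + 1), min (gg p n s) (gg q n s))
      atTop (nhds 0) := by
  set ε : ℝ := |p - q| / 2 with hε
  have hεpos : 0 < ε := by
    have : p - q ≠ 0 := sub_ne_zero.mpr hne
    have := abs_pos.mpr this
    positivity
  -- pointwise Chebyshev bound
  have key : ∀ n : ℕ, ∀ s : ℕ,
      ((n:ℝ) * ε) ^ 2 * min (gg p n s) (gg q n s) ≤
        ((n:ℝ) * p - s) ^ 2 * gg p n s + ((n:ℝ) * q - s) ^ 2 * gg q n s := by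
    intro n s
    have hgp := gg_nonneg hp n s
    have hgq := gg_nonneg hq n s
    have habs : |((n:ℝ) * p - s) - ((n:ℝ) * q - s)| = 2 * ((n:ℝ) * ε) := by
      rw [hε]
      have : (n:ℝ) * p - s - ((n:ℝ) * q - s) = (n:ℝ) * (p - q) := by ring
      rw [this, abs_mul, Nat.abs_cast]
      ring
    have hmax : ((n:ℝ) * ε) ≤ |(n:ℝ) * p - s| ∨ ((n:ℝ) * ε) ≤ |(n:ℝ) * q - s| := by
      by_contra hcon
      push_neg at hcon
      have := abs_sub_abs_le_abs_sub ((n:ℝ) * p - s) ((n:ℝ) * q - s)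
      have h2 := abs_sub ((n:ℝ) * p - s) ((n:ℝ) * q - s)
      rw [habs] at h2
      have := abs_nonneg ((n:ℝ) * p - s)
      linarith [hcon.1, hcon.2]
    have hnε : (0:ℝ) ≤ (n:ℝ) * ε := by positivity
    rcases hmax with h | h
    · have h2 : ((n:ℝ) * ε) ^ 2 ≤ ((n:ℝ) * p - s) ^ 2 := by
        calc ((n:ℝ) * ε) ^ 2 ≤ |(n:ℝ) * p - s| ^ 2 := by
              apply pow_le_pow_left₀ hnε h
          _ = ((n:ℝ) * p - s) ^ 2 := sq_abs _
      calc ((n:ℝ) * ε) ^ 2 * min (gg p n s) (gg q n s)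
          ≤ ((n:ℝ) * p - s) ^ 2 * gg p n s := by
            apply mul_le_mul h2 (min_le_left _ _) (le_min hgp hgq) (sq_nonneg _)
        _ ≤ _ := by nlinarith [sq_nonneg ((n:ℝ) * q - s)]
    · have h2 : ((n:ℝ) * ε) ^ 2 ≤ ((n:ℝ) * q - s) ^ 2 := by
        calc ((n:ℝ) * ε) ^ 2 ≤ |(n:ℝ) * q - s| ^ 2 := by
              apply pow_le_pow_left₀ hnε h
          _ = ((n:ℝ) * q - s) ^ 2 := sq_abs _
      calc ((n:ℝ) * ε) ^ 2 * min (gg p n s) (gg q n s)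
          ≤ ((n:ℝ) * q - s) ^ 2 * gg q n s := by
            apply mul_le_mul h2 (min_le_right _ _) (le_min hgp hgq) (sq_nonneg _)
        _ ≤ _ := by nlinarith [sq_nonneg ((n:ℝ) * p - s)]
  -- summed bound
  have sumbound : ∀ n : ℕ, 1 ≤ n →
      ∑ s ∈ Finset.range (n + 1), min (gg p n s) (gg q n s) ≤ (2 / ε ^ 2) / n := by
    intro n hn
    have hnpos : (0:ℝ) < n := by exact_mod_cast hn
    have h1 : ((n:ℝ) * ε) ^ 2 * ∑ s ∈ Finset.range (n + 1), min (gg p n s) (gg q n s) ≤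
        (n:ℝ) * p * (1 - p) + (n:ℝ) * q * (1 - q) := by
      rw [Finset.mul_sum, ← gg_variance p n, ← gg_variance q n, ← Finset.sum_add_distrib]
      exact Finset.sum_le_sum fun s _ => key n s
    have h2 : (n:ℝ) * p * (1 - p) + (n:ℝ) * q * (1 - q) ≤ 2 * n := by
      obtain ⟨hp0, hp1⟩ := hp; obtain ⟨hq0, hq1⟩ := hq
      nlinarith [mul_nonneg hnpos.le (sq_nonneg (p-1/2)), mul_nonneg hnpos.le (sq_nonneg (q-1/2))]
    have hsq : (0:ℝ) < ((n:ℝ) * ε) ^ 2 := by positivity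
    rw [div_div, le_div_iff₀ (by positivity)]
    calc (∑ s ∈ Finset.range (n + 1), min (gg p n s) (gg q n s)) * (ε ^ 2 * n)
        = (((n:ℝ) * ε) ^ 2 * ∑ s ∈ Finset.range (n + 1), min (gg p n s) (gg q n s)) / n := by
          field_simp
      _ ≤ (2 * (n:ℝ)) / n := div_le_div_of_nonneg_right (h1.trans h2) hnpos.le
      _ = 2 := by field_simp
  apply squeeze_zero' (g := fun n : ℕ => (2 / ε ^ 2) / n)
  · filter_upwards with n
    exact Finset.sum_nonneg fun s _ => le_min (gg_nonneg hp n s) (gg_nonneg hq n s)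
  · filter_upwards [eventually_ge_atTop 1] with n hn using sumbound n hn
  · exact tendsto_const_div_atTop_nhds_zero_nat _

/-- **Bernoulli instance of equation (9-1)**: for pairwise distinct
`θ_1,…,θ_k ∈ [0,1]` and `λ_{ij} ≥ 0`,
`Σ_{s=0}^n min_{1≤j≤k} Σ_{i≠j} λ_{ij} C(n,s) θ_i^s (1−θ_i)^{n−s} → 0` as `n → ∞`. -/
theorem stmt8 (k : ℕ) (hk : 2 ≤ k) (θs : Fin k → ℝ)
    (hθ : ∀ i, θs i ∈ Set.Icc (0 : ℝ) 1)
    (hdist : Function.Injective θs)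
    (lam : Fin k → Fin k → ℝ) (hlam : ∀ i j, 0 ≤ lam i j) :
    Tendsto
      (fun n : ℕ =>
        ∑ s ∈ Finset.range (n + 1),
          ⨅ j : Fin k, ∑ i ∈ Finset.univ.filter (· ≠ j),
            lam i j * ((n.choose s : ℝ) * θs i ^ s * (1 - θs i) ^ (n - s)))
      atTop (nhds 0) := by
  haveI : Nonempty (Fin k) := ⟨⟨0, by omega⟩⟩
  set F := fun n : ℕ =>
        ∑ s ∈ Finset.range (n + 1),
          ⨅ j : Fin k, ∑ i ∈ Finset.univ.filter (· ≠ j),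
            lam i j * ((n.choose s : ℝ) * θs i ^ s * (1 - θs i) ^ (n - s)) with hF
  set G := fun n : ℕ =>
        ∑ j : Fin k, ∑ i ∈ Finset.univ.filter (· ≠ j),
          lam i j * ∑ s ∈ Finset.range (n + 1), min (gg (θs i) n s) (gg (θs j) n s) with hG
  apply squeeze_zero (g := G)
  · intro n
    apply Finset.sum_nonneg
    intro s _
    apply le_ciInf
    intro j
    exact Finset.sum_nonneg fun i _ => mul_nonneg (hlam i j)
      (gg_nonneg (hθ i) n s)
  · intro n
    have hpt : ∀ s : ℕ,
        (⨅ j : Fin k, ∑ i ∈ Finset.univ.filter (· ≠ j),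
            lam i j * ((n.choose s : ℝ) * θs i ^ s * (1 - θs i) ^ (n - s))) ≤
        ∑ j : Fin k, ∑ i ∈ Finset.univ.filter (· ≠ j),
            lam i j * min (gg (θs i) n s) (gg (θs j) n s) := by
      intro s
      obtain ⟨m, -, hm⟩ := Finset.exists_max_image Finset.univ
        (fun i => gg (θs i) n s) Finset.univ_nonempty
      have step1 : (⨅ j : Fin k, ∑ i ∈ Finset.univ.filter (· ≠ j),
            lam i j * ((n.choose s : ℝ) * θs i ^ s * (1 - θs i) ^ (n - s))) ≤
          ∑ i ∈ Finset.univ.filter (· ≠ m),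
            lam i m * ((n.choose s : ℝ) * θs i ^ s * (1 - θs i) ^ (n - s)) :=
        ciInf_le (Set.Finite.bddBelow (Set.finite_range _)) m
      have step2 : ∑ i ∈ Finset.univ.filter (· ≠ m),
            lam i m * ((n.choose s : ℝ) * θs i ^ s * (1 - θs i) ^ (n - s)) =
          ∑ i ∈ Finset.univ.filter (· ≠ m),
            lam i m * min (gg (θs i) n s) (gg (θs m) n s) := by
        apply Finset.sum_congr rfl
        intro i _
        rw [min_eq_left (hm i (Finset.mem_univ i))]
        rfl
      refine (step1.trans_eq step2).trans ?_
      apply Finset.single_le_sum (f := fun j => ∑ i ∈ Finset.univ.filter (· ≠ j),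
          lam i j * min (gg (θs i) n s) (gg (θs j) n s)) ?_ (Finset.mem_univ m)
      intro j _
      exact Finset.sum_nonneg fun i _ => mul_nonneg (hlam i j)
        (le_min (gg_nonneg (hθ i) n s) (gg_nonneg (hθ j) n s))
    calc F n ≤ ∑ s ∈ Finset.range (n + 1), ∑ j : Fin k,
          ∑ i ∈ Finset.univ.filter (· ≠ j),
            lam i j * min (gg (θs i) n s) (gg (θs j) n s) :=
          Finset.sum_le_sum fun s _ => hpt s
      _ = G n := by
          rw [hG, Finset.sum_comm]
          apply Finset.sum_congr rfl
          intro j _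
          rw [Finset.sum_comm]
          exact Finset.sum_congr rfl fun i _ => (Finset.mul_sum _ _ _).symm
  · rw [hG]
    have : (0:ℝ) = ∑ j : Fin k, ∑ i ∈ Finset.univ.filter (· ≠ j), (0:ℝ) := by simp
    rw [this]
    apply tendsto_finset_sum
    intro j _
    apply tendsto_finset_sum
    intro i hi
    have hij : i ≠ j := by simpa using (Finset.mem_filter.mp hi).2
    have hθij : θs i ≠ θs j := fun h => hij (hdist h)
    simpa using (pair_tendsto (hθ i) (hθ j) hθij).const_mul (lam i j)
end

section
/- Let (X, 𝒜, μ) be a σ-finite measure space, k ≥ 2, and let f_1,…,f_k : X → [0,∞) be measurable with ∫ f_l dμ = 1 for each l, such that for every l ≠ i the set {x : f_l(x) ≠ f_i(x)} has positive μ-measure. Fix i ≠ j and numbers λ_{lm} ≥ 0 with λ_{ij} > 0. For x ∈ X^n write f_l^n(x) = ∏_{m=1}^n f_l(x_m), and let A_n = {x ∈ X^n : Σ_{l≠j} λ_{lj} f_l^n(x) ≤ Σ_{l≠i} λ_{li} f_l^n(x)}. Then ∫_{A_n} f_i^n dμ^n → 0 as n → ∞. (Key step in the Appendix: the error probability α_{ij}(n,φ)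 of the fixed-sample-size test with the optimal decision rule is bounded by this quantity and tends to 0.) -/
open scoped BigOperators
open MeasureTheory Filter

/-- sqrt of a finite product of nonnegatives. -/
lemma aux_sqrt_prod {ι : Type*} (s : Finset ι) (u : ι → ℝ) (hu : ∀ m ∈ s, 0 ≤ u m) :
    Real.sqrt (∏ m ∈ s, u m) = ∏ m ∈ s, Real.sqrt (u m) := by
  classical
  induction s using Finset.induction with
  | empty => simp
  | @insert a s ha ih =>
    rw [Finset.prod_insert ha, Finset.prod_insert ha,
      Real.sqrt_mul (hu a (Finset.mem_insert_self a s)),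
      ih (fun m hm => hu m (Finset.mem_insert_of_mem hm))]

lemma aux_min_le_sqrt {a b : ℝ} (ha : 0 ≤ a) (hb : 0 ≤ b) :
    min a b ≤ Real.sqrt (a * b) := by
  rw [show min a b = Real.sqrt (min a b ^ 2) from
    (Real.sqrt_sq (le_min ha hb)).symm]
  apply Real.sqrt_le_sqrt
  rcases le_total a b with h | h
  · rw [min_eq_left h]; nlinarith
  · rw [min_eq_right h]; nlinarith

lemma aux_le_sum_min {ι : Type*} (s : Finset ι) (b : ι → ℝ) (hb : ∀ l ∈ s, 0 ≤ b l) :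
    ∀ a : ℝ, 0 ≤ a → a ≤ ∑ l ∈ s, b l → a ≤ ∑ l ∈ s, min a (b l) := by
  classical
  induction s using Finset.induction with
  | empty => intro a _ h; simpa using h
  | @insert c s hc ih =>
    intro a ha h
    rw [Finset.sum_insert hc] at h ⊢
    rcases le_total a (b c) with hab | hab
    · rw [min_eq_left hab]
      have : 0 ≤ ∑ l ∈ s, min a (b l) :=
        Finset.sum_nonneg fun l hl => le_min ha (hb l (Finset.mem_insert_of_mem hl))
      linarith
    · rw [min_eq_right hab]
      have h1 : a - b c ≤ ∑ l ∈ s, min (a - b c) (b l) :=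
        ih (fun l hl => hb l (Finset.mem_insert_of_mem hl)) (a - b c)
          (by linarith) (by linarith)
      have h2 : ∑ l ∈ s, min (a - b c) (b l) ≤ ∑ l ∈ s, min a (b l) :=
        Finset.sum_le_sum fun l hl =>
          min_le_min (by linarith [hb c (Finset.mem_insert_self c s)]) le_rfl
      linarith

lemma aux_pi_integral {X : Type*} [MeasurableSpace X] (μ : Measure X) [SigmaFinite μ]
    (g : X → ℝ) (n : ℕ) :
    ∫ x : Fin n → X, (∏ m, g (x m)) ∂(Measure.pi fun _ : Fin n => μ)
      = (∫ x, g x ∂μ) ^ n := by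
  letI : MeasureSpace X := ⟨μ⟩
  haveI : SigmaFinite (volume : Measure X) := ‹SigmaFinite μ›
  simpa [Fintype.card_fin] using MeasureTheory.integral_fintype_prod_eq_pow (ι := Fin n) g (μ := μ)

lemma aux_pi_integrable {X : Type*} [MeasurableSpace X] (μ : Measure X) [SigmaFinite μ]
    {g : X → ℝ} (hg : Integrable g μ) (n : ℕ) :
    Integrable (fun x : Fin n → X => ∏ m, g (x m)) (Measure.pi fun _ : Fin n => μ) := by
  letI : MeasureSpace X := ⟨μ⟩
  haveI : SigmaFinite (volume : Measure X) := ‹SigmaFinite μ›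
  exact MeasureTheory.Integrable.fintype_prod (f := fun _ : Fin n => g) (fun _ => hg)

/-- **Key step in the Appendix**: with probability densities `f_1,…,f_k` (pairwise
different on sets of positive measure), `λ_{lm} ≥ 0`, `λ_{ij} > 0` for fixed `i ≠ j`,
and `A_n = {x ∈ X^n : Σ_{l≠j} λ_{lj} f_l^n(x) ≤ Σ_{l≠i} λ_{li} f_l^n(x)}`, one has
`∫_{A_n} f_i^n dμ^n → 0` as `n → ∞`. -/
theorem stmt11 {X : Type*} [MeasurableSpace X] (μ : Measure X) [SigmaFinite μ]
    (k : ℕ) (hk : 2 ≤ k) (f : Fin k → X → ℝ)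
    (hmeas : ∀ l, Measurable (f l)) (hnonneg : ∀ l x, 0 ≤ f l x)
    (hint : ∀ l, ∫ x, f l x ∂μ = 1)
    (hdiff : ∀ l i, l ≠ i → 0 < μ {x | f l x ≠ f i x})
    (i j : Fin k) (hij : i ≠ j)
    (lam : Fin k → Fin k → ℝ) (hlam : ∀ l m, 0 ≤ lam l m) (hij0 : 0 < lam i j) :
    Tendsto
      (fun n : ℕ =>
        ∫ x in {x : Fin n → X |
            ∑ l ∈ Finset.univ.filter (· ≠ j), lam l j * ∏ m, f l (x m) ≤
              ∑ l ∈ Finset.univ.filter (· ≠ i), lam l i * ∏ m, f l (x m)},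
          (∏ m, f i (x m)) ∂(Measure.pi fun _ : Fin n => μ))
      atTop (nhds 0) := by
  classical
  -- each `f l` is integrable
  have hFint : ∀ l, Integrable (f l) μ := by
    intro l
    by_contra h
    have h1 := hint l
    rw [integral_undef h] at h1
    exact zero_ne_one h1
  -- the geometric-mean densities
  set g : Fin k → X → ℝ := fun l x => Real.sqrt (f i x * f l x) with hgdef
  have hgnonneg : ∀ l x, 0 ≤ g l x := fun l x => Real.sqrt_nonneg _
  have hgmeas : ∀ l, Measurable (g l) := fun l =>
    Real.continuous_sqrt.measurable.comp ((hmeas i).mul (hmeas l))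
  have hgle : ∀ l x, g l x ≤ (f i x + f l x) / 2 := by
    intro l x
    simp only [hgdef]
    rw [Real.sqrt_mul (hnonneg i x)]
    nlinarith [sq_nonneg (Real.sqrt (f i x) - Real.sqrt (f l x)),
      Real.sq_sqrt (hnonneg i x), Real.sq_sqrt (hnonneg l x),
      Real.sqrt_nonneg (f i x), Real.sqrt_nonneg (f l x)]
  have hgint : ∀ l, Integrable (g l) μ := fun l =>
    (((hFint i).add (hFint l)).div_const 2).mono' (hgmeas l).aestronglyMeasurable
      (Filter.Eventually.of_forall fun x => by
        rw [Real.norm_eq_abs, abs_of_nonneg (hgnonneg l x)]; exact hgle l x)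
  set r : Fin k → ℝ := fun l => ∫ x, g l x ∂μ with hrdef
  have hr0 : ∀ l, 0 ≤ r l := fun l => integral_nonneg (hgnonneg l)
  -- strict Cauchy–Schwarz: r l < 1 for l ≠ i
  have hr1 : ∀ l, l ≠ i → r l < 1 := by
    intro l hl
    have hsq : ∀ x, (Real.sqrt (f i x) - Real.sqrt (f l x)) ^ 2
        = f i x + f l x - 2 * g l x := by
      intro x
      simp only [hgdef]
      rw [sub_sq, Real.sq_sqrt (hnonneg i x), Real.sq_sqrt (hnonneg l x),
        Real.sqrt_mul (hnonneg i x)]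
      ring
    have hint2 : Integrable (fun x => (Real.sqrt (f i x) - Real.sqrt (f l x)) ^ 2) μ := by
      have heq : (fun x => (Real.sqrt (f i x) - Real.sqrt (f l x)) ^ 2)
          = fun x => f i x + f l x - 2 * g l x := funext hsq
      rw [heq]
      exact ((hFint i).add (hFint l)).sub ((hgint l).const_mul 2)
    have hpos : 0 < ∫ x, (Real.sqrt (f i x) - Real.sqrt (f l x)) ^ 2 ∂μ := by
      rw [integral_pos_iff_support_of_nonneg (fun x => sq_nonneg _) hint2]
      refine lt_of_lt_of_le (hdiff l i hl) (measure_mono ?_)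
      intro x hx
      simp only [Function.mem_support]
      intro h0
      have h1 : Real.sqrt (f i x) = Real.sqrt (f l x) :=
        sub_eq_zero.mp (pow_eq_zero_iff two_ne_zero |>.mp h0)
      exact hx (((Real.sqrt_inj (hnonneg i x) (hnonneg l x)).mp h1).symm)
    have hcalc : ∫ x, (Real.sqrt (f i x) - Real.sqrt (f l x)) ^ 2 ∂μ = 2 - 2 * r l := by
      simp_rw [hsq]
      have hfi : Integrable (fun x => f i x + f l x) μ := (hFint i).add (hFint l)
      have hgl2 : Integrable (fun x => 2 * g l x) μ := (hgint l).const_mul 2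
      rw [integral_sub hfi hgl2, integral_add (hFint i) (hFint l), hint i, hint l,
        integral_const_mul]
      ring
    rw [hcalc] at hpos
    linarith
  -- the coefficients
  set c : Fin k → ℝ := fun l => Real.sqrt (lam l i / lam i j) with hcdef
  set s : Finset (Fin k) := Finset.univ.filter (· ≠ i) with hsdef
  -- the dominating sequence
  have hB : Tendsto (fun n : ℕ => ∑ l ∈ s, c l * r l ^ n) atTop (nhds 0) := by
    have h0 : Tendsto (fun n : ℕ => ∑ l ∈ s, c l * r l ^ n) atTop
        (nhds (∑ l ∈ s, c l * 0)) := by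
      refine tendsto_finset_sum _ (fun l hl => ?_)
      have hli : l ≠ i := (Finset.mem_filter.mp hl).2
      exact (tendsto_pow_atTop_nhds_zero_of_lt_one (hr0 l) (hr1 l hli)).const_mul _
    simpa using h0
  -- measurability of the sets A n
  have hA : ∀ n : ℕ, MeasurableSet {x : Fin n → X |
      ∑ l ∈ Finset.univ.filter (· ≠ j), lam l j * ∏ m, f l (x m) ≤
        ∑ l ∈ Finset.univ.filter (· ≠ i), lam l i * ∏ m, f l (x m)} := by
    intro n
    apply measurableSet_le
    · exact Finset.measurable_sum _ fun l _ => (measurable_const.mul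
        (Finset.measurable_prod _ fun m _ => (hmeas l).comp (measurable_pi_apply m)))
    · exact Finset.measurable_sum _ fun l _ => (measurable_const.mul
        (Finset.measurable_prod _ fun m _ => (hmeas l).comp (measurable_pi_apply m)))
  -- squeeze
  refine squeeze_zero (fun n => setIntegral_nonneg (hA n)
    (fun x _ => Finset.prod_nonneg fun m _ => hnonneg i (x m))) (fun n => ?_) hB
  set Pn : Measure (Fin n → X) := Measure.pi fun _ : Fin n => μ with hPndef
  set A : Set (Fin n → X) := {x : Fin n → X |
      ∑ l ∈ Finset.univ.filter (· ≠ j), lam l j * ∏ m, f l (x m) ≤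
        ∑ l ∈ Finset.univ.filter (· ≠ i), lam l i * ∏ m, f l (x m)} with hAdef
  set G : (Fin n → X) → ℝ := fun x => ∑ l ∈ s, c l * ∏ m, g l (x m) with hGdef
  have hGint : Integrable G Pn :=
    integrable_finset_sum _ fun l _ => (aux_pi_integrable μ (hgint l) n).const_mul (c l)
  have hGnonneg : ∀ x, 0 ≤ G x := fun x =>
    Finset.sum_nonneg fun l _ => mul_nonneg (Real.sqrt_nonneg _)
      (Finset.prod_nonneg fun m _ => hgnonneg l (x m))
  -- the pointwise bound on A
  have hpoint : ∀ x ∈ A, (∏ m, f i (x m)) ≤ G x := by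
    intro x hx
    have hx' : ∑ l ∈ Finset.univ.filter (· ≠ j), lam l j * ∏ m, f l (x m) ≤
        ∑ l ∈ Finset.univ.filter (· ≠ i), lam l i * ∏ m, f l (x m) := hx
    set P : Fin k → ℝ := fun l => ∏ m, f l (x m) with hPdef
    have hPnn : ∀ l, 0 ≤ P l := fun l => Finset.prod_nonneg fun m _ => hnonneg l (x m)
    have step1 : lam i j * P i ≤ ∑ l ∈ Finset.univ.filter (· ≠ j), lam l j * P l :=
      Finset.single_le_sum (f := fun l => lam l j * P l)
        (fun l _ => mul_nonneg (hlam l j) (hPnn l))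
        (by simp [Finset.mem_filter, hij])
    have step2 : P i ≤ ∑ l ∈ s, (lam l i / lam i j) * P l := by
      have hsum : ∑ l ∈ s, (lam l i / lam i j) * P l
          = (∑ l ∈ s, lam l i * P l) / lam i j := by
        rw [Finset.sum_div]
        exact Finset.sum_congr rfl fun l _ => by ring
      rw [hsum, le_div_iff₀ hij0]
      calc P i * lam i j = lam i j * P i := mul_comm _ _
        _ ≤ _ := step1.trans hx'
    have step3 : P i ≤ ∑ l ∈ s, min (P i) ((lam l i / lam i j) * P l) :=
      aux_le_sum_min s _ (fun l _ => mul_nonneg (div_nonneg (hlam l i) hij0.le) (hPnn l))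
        (P i) (hPnn i) step2
    have hterm : ∀ l ∈ s, min (P i) ((lam l i / lam i j) * P l)
        ≤ c l * ∏ m, g l (x m) := by
      intro l _
      refine (aux_min_le_sqrt (hPnn i)
        (mul_nonneg (div_nonneg (hlam l i) hij0.le) (hPnn l))).trans_eq ?_
      rw [show P i * ((lam l i / lam i j) * P l)
            = (lam l i / lam i j) * (P i * P l) by ring,
        Real.sqrt_mul (div_nonneg (hlam l i) hij0.le),
        show P i * P l = ∏ m, (f i (x m) * f l (x m)) from (Finset.prod_mul_distrib).symm,
        aux_sqrt_prod _ _ (fun m _ => mul_nonneg (hnonneg i (x m)) (hnonneg l (x m)))]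
    exact step3.trans (Finset.sum_le_sum hterm)
  calc ∫ x in A, (∏ m, f i (x m)) ∂Pn
      ≤ ∫ x in A, G x ∂Pn :=
        setIntegral_mono_on (aux_pi_integrable μ (hFint i) n).integrableOn
          hGint.integrableOn (hA n) hpoint
    _ ≤ ∫ x, G x ∂Pn :=
        setIntegral_le_integral hGint (Filter.Eventually.of_forall hGnonneg)
    _ = ∑ l ∈ s, c l * r l ^ n := by
        rw [hGdef]
        rw [integral_finset_sum _ fun l _ =>
          (aux_pi_integrable μ (hgint l) n).const_mul (c l)]
        exact Finset.sum_congr rfl fun l _ => by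
          rw [integral_const_mul, aux_pi_integral μ (g l) n]
end

section
/- For the Bernoulli model, the backward-induction values are monotone in the truncation level: for every N ≥ 2, every n = 1,…,N, and every x ∈ {0,1}^n, one has V_n^{N+1}(x) ≤ V_n^N(x); consequently the limit V_n(x) = lim_{N→∞} V_n^N(x) exists. -/
open scoped BigOperators
open Filter

lemma fpow_nonneg' {θ : ℝ} (h : θ ∈ Set.Icc (0:ℝ) 1) (n : ℕ) (x : Fin n → Bool) :
    0 ≤ fpow θ n x :=
  mul_nonneg (pow_nonneg h.1 _) (pow_nonneg (by linarith [h.2]) _)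

lemma vfun_nonneg' {k : ℕ} {θs : Fin k → ℝ} (hθ : ∀ i, θs i ∈ Set.Icc (0:ℝ) 1)
    {lam : Fin k → Fin k → ℝ} (hlam : ∀ i j, 0 ≤ lam i j) (n : ℕ) (x : Fin n → Bool) :
    0 ≤ vfun k θs lam n x :=
  Real.iInf_nonneg fun j => Finset.sum_nonneg fun i _ =>
    mul_nonneg (hlam i j) (fpow_nonneg' (hθ i) n x)

lemma fmix_nonneg' {K : ℕ} {γ ϑ : Fin K → ℝ} (hγ : ∀ i, 0 ≤ γ i)
    (hϑ : ∀ i, ϑ i ∈ Set.Icc (0:ℝ) 1) (n : ℕ) (x : Fin n → Bool) :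
    0 ≤ fmix K γ ϑ n x :=
  Finset.sum_nonneg fun i _ => mul_nonneg (hγ i) (fpow_nonneg' (hϑ i) n x)

lemma V_nonneg' {k : ℕ} {θs : Fin k → ℝ} (hθ : ∀ i, θs i ∈ Set.Icc (0:ℝ) 1)
    {lam : Fin k → Fin k → ℝ} (hlam : ∀ i j, 0 ≤ lam i j)
    {K : ℕ} {γ ϑ : Fin K → ℝ} (hγ : ∀ i, 0 ≤ γ i)
    (hϑ : ∀ i, ϑ i ∈ Set.Icc (0:ℝ) 1) (N n : ℕ) (x : Fin n → Bool) :
    0 ≤ V k θs lam K γ ϑ N n x := by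
  rw [V]
  split
  · exact le_min (vfun_nonneg' hθ hlam n x)
      (add_nonneg (fmix_nonneg' hγ hϑ n x)
        (add_nonneg (V_nonneg' hθ hlam hγ hϑ N (n+1) _) (V_nonneg' hθ hlam hγ hϑ N (n+1) _)))
  · exact vfun_nonneg' hθ hlam n x
  termination_by N - n

lemma V_succ_le' {k : ℕ} (θs : Fin k → ℝ) (lam : Fin k → Fin k → ℝ)
    {K : ℕ} (γ ϑ : Fin K → ℝ) (N n : ℕ) (x : Fin n → Bool) :
    V k θs lam K γ ϑ (N+1) n x ≤ V k θs lam K γ ϑ N n x := by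
  by_cases h : n < N
  · conv_lhs => rw [V]
    conv_rhs => rw [V]
    rw [dif_pos h, dif_pos (by omega : n < N + 1)]
    exact min_le_min le_rfl (add_le_add_right
      (add_le_add (V_succ_le' θs lam γ ϑ N (n+1) _) (V_succ_le' θs lam γ ϑ N (n+1) _)) _)
  · conv_rhs => rw [V]
    conv_lhs => rw [V]
    rw [dif_neg h]
    split
    · exact min_le_left _ _
    · exact le_rfl
  termination_by N - n

/-- **Monotonicity in the truncation level**: for every `N ≥ 2`, `n = 1,…,N` and
`x ∈ {0,1}^n`, `V_n^{N+1}(x) ≤ V_n^N(x)`; consequently the limit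
`V_n(x) = lim_{N→∞} V_n^N(x)` exists. -/
theorem stmt12 (k : ℕ) (hk : 2 ≤ k) (θs : Fin k → ℝ)
    (hθ : ∀ i, θs i ∈ Set.Icc (0 : ℝ) 1)
    (lam : Fin k → Fin k → ℝ) (hlam : ∀ i j, 0 ≤ lam i j)
    (K : ℕ) (hK : 1 ≤ K) (γ ϑ : Fin K → ℝ)
    (hγ : ∀ i, 0 ≤ γ i) (hγ1 : ∑ i, γ i = 1)
    (hϑ : ∀ i, ϑ i ∈ Set.Icc (0 : ℝ) 1) :
    (∀ N : ℕ, 2 ≤ N → ∀ n : ℕ, 1 ≤ n → n ≤ N → ∀ x : Fin n → Bool,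
        V k θs lam K γ ϑ (N + 1) n x ≤ V k θs lam K γ ϑ N n x) ∧
      (∀ n : ℕ, 1 ≤ n → ∀ x : Fin n → Bool,
        ∃ L : ℝ, Tendsto (fun N : ℕ => V k θs lam K γ ϑ N n x) atTop (nhds L)) := by
  constructor
  · intro N _ n _ _ x
    exact V_succ_le' θs lam γ ϑ N n x
  · intro n _ x
    refine ⟨⨅ N : ℕ, V k θs lam K γ ϑ N n x, tendsto_atTop_ciInf ?_ ?_⟩
    · exact antitone_nat_of_succ_le fun N => V_succ_le' θs lam γ ϑ N n x
    · exact ⟨0, fun y ⟨N, hN⟩ => hN ▸ V_nonneg' hθ hlam hγ hϑ N n x⟩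
end
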